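/- Let p ≥ 2 and 0 < γ < Γ. For all x ∈ [γ,Γ]: (1/2)·p·(p−1)·γ^(p−2)·(Γ−x)·(x−γ) ≤ ((Γ−x)·γ^p + (x−γ)·Γ^p)/(Γ−γ) − x^p ≤ (1/2)·p·(p−1)·Γ^(p−2)·(Γ−x)·(x−γ). -/

import Mathlib

open Set Real

private lemma interp_deriv1 (p γ Γ c : ℝ) (hp : 2 ≤ p) (t : ℝ) :
    HasDerivAt (fun t : ℝ =>
        ((Γ - t) * γ ^ p + (t - γ) * Γ ^ p) / (Γ - γ) - t ^ p - c / 2 * ((Γ - t) * (t - γ)))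
      ((-(γ ^ p) + Γ ^ p) / (Γ - γ) - p * t ^ (p - 1) - c / 2 * (-(t - γ) + (Γ - t))) t := by
  have h1 : HasDerivAt (fun t : ℝ => ((Γ - t) * γ ^ p + (t - γ) * Γ ^ p) / (Γ - γ))
      (((-1) * γ ^ p + 1 * Γ ^ p) / (Γ - γ)) t :=
    ((((hasDerivAt_id t).const_sub Γ).mul_const (γ ^ p)).add
      (((hasDerivAt_id t).sub_const γ).mul_const (Γ ^ p))).div_const (Γ - γ)
  have h2 : HasDerivAt (fun t : ℝ => t ^ p) (p * t ^ (p - 1)) t :=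
    Real.hasDerivAt_rpow_const (Or.inr (by linarith))
  have h3 : HasDerivAt (fun t : ℝ => c / 2 * ((Γ - t) * (t - γ)))
      (c / 2 * ((-1) * (t - γ) + (Γ - t) * 1)) t :=
    ((((hasDerivAt_id t).const_sub Γ).mul ((hasDerivAt_id t).sub_const γ))).const_mul (c / 2)
  have := (h1.sub h2).sub h3
  refine this.congr_deriv ?_
  ring

private lemma interp_deriv2 (p γ Γ c : ℝ) (hp : 2 ≤ p) (t : ℝ) :
    HasDerivAt (fun t : ℝ =>
        (-(γ ^ p) + Γ ^ p) / (Γ - γ) - p * t ^ (p - 1) - c / 2 * (-(t - γ) + (Γ - t)))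
      (-(p * (p - 1) * t ^ (p - 2)) + c) t := by
  have h2 : HasDerivAt (fun t : ℝ => t ^ (p - 1)) ((p - 1) * t ^ (p - 1 - 1)) t :=
    Real.hasDerivAt_rpow_const (Or.inr (by linarith))
  have h2' : HasDerivAt (fun t : ℝ => p * t ^ (p - 1)) (p * ((p - 1) * t ^ (p - 1 - 1))) t :=
    h2.const_mul p
  have h3 : HasDerivAt (fun t : ℝ => c / 2 * (-(t - γ) + (Γ - t)))
      (c / 2 * (-(1:ℝ) + -1)) t := by
    have : HasDerivAt (fun t : ℝ => -(t - γ) + (Γ - t)) (-(1:ℝ) + -1) t :=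
      (((hasDerivAt_id t).sub_const γ).neg).add ((hasDerivAt_id t).const_sub Γ)
    exact this.const_mul (c / 2)
  have := ((hasDerivAt_const t ((-(γ ^ p) + Γ ^ p) / (Γ - γ))).sub h2').sub h3
  have hexp : p - 1 - 1 = p - 2 := by ring
  rw [hexp] at this
  refine this.congr_deriv ?_
  ring

private lemma interp_lower (p : ℝ) (hp : 2 ≤ p) (γ Γ c : ℝ) (hγ : 0 < γ) (hγΓ : γ < Γ)
    (hc : ∀ t ∈ Set.Ioo γ Γ, c ≤ p * (p - 1) * t ^ (p - 2))
    (x : ℝ) (hx : x ∈ Set.Icc γ Γ) :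
    c / 2 * ((Γ - x) * (x - γ)) ≤ ((Γ - x) * γ ^ p + (x - γ) * Γ ^ p) / (Γ - γ) - x ^ p := by
  set h : ℝ → ℝ := fun t =>
    ((Γ - t) * γ ^ p + (t - γ) * Γ ^ p) / (Γ - γ) - t ^ p - c / 2 * ((Γ - t) * (t - γ)) with hh
  have hd := interp_deriv1 p γ Γ c hp
  have hd2 := interp_deriv2 p γ Γ c hp
  have hcon : ConcaveOn ℝ (Icc γ Γ) h := by
    apply concaveOn_of_hasDerivWithinAt2_nonpos (convex_Icc γ Γ)
      (fun t _ => (hd t).continuousAt.continuousWithinAt)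
      (fun t _ => (hd t).hasDerivWithinAt)
      (fun t _ => (hd2 t).hasDerivWithinAt)
    intro t ht
    rw [interior_Icc] at ht
    have := hc t ht
    linarith
  have hne : Γ - γ ≠ 0 := by linarith
  have hγ0 : h γ = 0 := by
    simp only [hh]
    field_simp
    ring
  have hΓ0 : h Γ = 0 := by
    simp only [hh]
    field_simp
    ring
  set a := (Γ - x) / (Γ - γ) with ha'
  set b := (x - γ) / (Γ - γ) with hb'
  have hd0 : (0:ℝ) < Γ - γ := by linarith
  have ha : 0 ≤ a := div_nonneg (by linarith [hx.2]) hd0.le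
  have hb : 0 ≤ b := div_nonneg (by linarith [hx.1]) hd0.le
  have hab : a + b = 1 := by rw [ha', hb', ← add_div, div_eq_one_iff_eq hne]; ring
  have hax : a • γ + b • Γ = x := by
    simp only [smul_eq_mul, ha', hb']
    field_simp
    ring
  have key := hcon.2 (left_mem_Icc.mpr hγΓ.le) (right_mem_Icc.mpr hγΓ.le) ha hb hab
  rw [hax, hγ0, hΓ0] at key
  simp only [smul_eq_mul, mul_zero, add_zero] at key
  have : 0 ≤ h x := key
  simp only [hh] at this
  linarith

private lemma interp_upper (p : ℝ) (hp : 2 ≤ p) (γ Γ c : ℝ) (hγ : 0 < γ) (hγΓ : γ < Γ)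
    (hc : ∀ t ∈ Set.Ioo γ Γ, p * (p - 1) * t ^ (p - 2) ≤ c)
    (x : ℝ) (hx : x ∈ Set.Icc γ Γ) :
    ((Γ - x) * γ ^ p + (x - γ) * Γ ^ p) / (Γ - γ) - x ^ p ≤ c / 2 * ((Γ - x) * (x - γ)) := by
  set h : ℝ → ℝ := fun t =>
    ((Γ - t) * γ ^ p + (t - γ) * Γ ^ p) / (Γ - γ) - t ^ p - c / 2 * ((Γ - t) * (t - γ)) with hh
  have hd := interp_deriv1 p γ Γ c hp
  have hd2 := interp_deriv2 p γ Γ c hp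
  have hcon : ConvexOn ℝ (Icc γ Γ) h := by
    apply convexOn_of_hasDerivWithinAt2_nonneg (convex_Icc γ Γ)
      (fun t _ => (hd t).continuousAt.continuousWithinAt)
      (fun t _ => (hd t).hasDerivWithinAt)
      (fun t _ => (hd2 t).hasDerivWithinAt)
    intro t ht
    rw [interior_Icc] at ht
    have := hc t ht
    linarith
  have hne : Γ - γ ≠ 0 := by linarith
  have hγ0 : h γ = 0 := by
    simp only [hh]
    field_simp
    ring
  have hΓ0 : h Γ = 0 := by
    simp only [hh]
    field_simp
    ring
  set a := (Γ - x) / (Γ - γ) with ha'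
  set b := (x - γ) / (Γ - γ) with hb'
  have hd0 : (0:ℝ) < Γ - γ := by linarith
  have ha : 0 ≤ a := div_nonneg (by linarith [hx.2]) hd0.le
  have hb : 0 ≤ b := div_nonneg (by linarith [hx.1]) hd0.le
  have hab : a + b = 1 := by rw [ha', hb', ← add_div, div_eq_one_iff_eq hne]; ring
  have hax : a • γ + b • Γ = x := by
    simp only [smul_eq_mul, ha', hb']
    field_simp
    ring
  have key := hcon.2 (left_mem_Icc.mpr hγΓ.le) (right_mem_Icc.mpr hγΓ.le) ha hb hab
  rw [hax, hγ0, hΓ0] at key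
  simp only [smul_eq_mul, mul_zero, add_zero] at key
  have : h x ≤ 0 := key
  simp only [hh] at this
  linarith

theorem stmt_14 (p : ℝ) (hp : 2 ≤ p) (γ Γ : ℝ) (hγ : 0 < γ) (hγΓ : γ < Γ)
    (x : ℝ) (hx : x ∈ Set.Icc γ Γ) :
    1/2 * p * (p - 1) * γ ^ (p - 2) * (Γ - x) * (x - γ)
      ≤ ((Γ - x) * γ ^ p + (x - γ) * Γ ^ p) / (Γ - γ) - x ^ p ∧
    ((Γ - x) * γ ^ p + (x - γ) * Γ ^ p) / (Γ - γ) - x ^ p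
      ≤ 1/2 * p * (p - 1) * Γ ^ (p - 2) * (Γ - x) * (x - γ) := by
  have hpp : 0 ≤ p * (p - 1) := by nlinarith
  constructor
  · have hc : ∀ t ∈ Set.Ioo γ Γ, p * (p - 1) * γ ^ (p - 2) ≤ p * (p - 1) * t ^ (p - 2) := by
      intro t ht
      exact mul_le_mul_of_nonneg_left
        (Real.rpow_le_rpow hγ.le ht.1.le (by linarith)) hpp
    have := interp_lower p hp γ Γ (p * (p - 1) * γ ^ (p - 2)) hγ hγΓ hc x hx
    nlinarith [this]
  · have hc : ∀ t ∈ Set.Ioo γ Γ, p * (p - 1) * t ^ (p - 2) ≤ p * (p - 1) * Γ ^ (p - 2) := by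
      intro t ht
      exact mul_le_mul_of_nonneg_left
        (Real.rpow_le_rpow (by linarith [ht.1] : (0:ℝ) ≤ t) ht.2.le (by linarith)) hpp
    have := interp_upper p hp γ Γ (p * (p - 1) * Γ ^ (p - 2)) hγ hγΓ hc x hx
    nlinarith [this]
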